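/- arXiv:1205.0513 — 2 statements merged into one kernel-verified Lean document; each statement's English description precedes it below -/
import Mathlib

section
/- Let H be a group of automorphisms of a graph Γ with vertex set V. Suppose there exist σ ∈ V, a σ-projection Π_σ on Γ, and a nonempty finite Π_σ-convex subset R ⊆ V which is H-invariant (hR = R for all h ∈ H). Then the subgraph of Γ induced on R is dismantlable and Γ contains an H-invariant clique. -/
open SimpleGraph

variable {V : Type*}

/-- The closed neighbourhood of a vertex: the vertex together with all its neighbours. -/
def closedNbhd (G : SimpleGraph V) (ρ : V) : Set V := insert ρ {w | G.Adj ρ w}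

/-- `ρ` is dominated by `π` within the subgraph of `G` induced on `S`:
`π ∈ S`, `π ≠ ρ`, and `N(ρ) ∩ S ⊆ N(π)`. -/
def DominatedIn (G : SimpleGraph V) (S : Set V) (ρ π : V) : Prop :=
  π ∈ S ∧ π ≠ ρ ∧ ∀ w ∈ S, w ∈ closedNbhd G ρ → w ∈ closedNbhd G π

/-- The subgraph of `G` induced on `S` is dismantlable: the vertices of `S` can be
arranged in a (finite) list such that each vertex except the last is dominated in the
subgraph induced on it and the later vertices. -/
def DismantlableOn (G : SimpleGraph V) (S : Set V) : Prop :=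
  ∃ l : List V, l.Nodup ∧ (∀ v, v ∈ l ↔ v ∈ S) ∧
    ∀ (i : ℕ) (h : i < l.length), i < l.length - 1 →
      ∃ π, DominatedIn G {w | w ∈ l.drop i} (l[i]'h) π

/-- A graph is dismantlable if the subgraph induced on all of its vertices is. -/
def Dismantlable (G : SimpleGraph V) : Prop := DismantlableOn G Set.univ

/-- The set `Π*(ρ)` of all vertices appearing in pairs of `Π ρ`. -/
def PiStar (Pr : V → Finset (Sym2 V)) (ρ : V) : Set V := {v | ∃ p ∈ Pr ρ, v ∈ p}

/-- `Pr` is a `σ`-projection: it assigns to each vertex `ρ ≠ σ` a nonempty finite set of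
unordered pairs of vertices such that (i) every finite set `R` containing a vertex other
than `σ` has an exposed vertex, and (ii) there is no cycle `ρ₀, …, ρ_{m-1}` with
`ρ_{i+1} ∈ Π*(ρ_i)` (indices mod `m`). -/
structure IsSigmaProjection (G : SimpleGraph V) (σ : V) (Pr : V → Finset (Sym2 V)) : Prop where
  nonempty : ∀ ρ, ρ ≠ σ → (Pr ρ).Nonempty
  exposed : ∀ R : Finset V, (∃ ρ ∈ R, ρ ≠ σ) →
    ∃ ρ ∈ R, ρ ≠ σ ∧ ∃ p ∈ Pr ρ, ∀ π ∈ p,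
      ∀ w ∈ R, w ∈ closedNbhd G ρ → w ∈ closedNbhd G π
  acyclic : ¬ ∃ m : ℕ, 0 < m ∧ ∃ f : ZMod m → V,
    ∀ i, f i ≠ σ ∧ f (i + 1) ∈ PiStar Pr (f i)

/-- `R` is `Π`-convex: for every `ρ ∈ R` other than `σ`, each pair in `Π ρ` meets `R`. -/
def PiConvex (σ : V) (Pr : V → Finset (Sym2 V)) (R : Set V) : Prop :=
  ∀ ρ ∈ R, ρ ≠ σ → ∀ p ∈ Pr ρ, ∃ v ∈ p, v ∈ R

/-- The orbit `HR` of a set `R` under a group action. -/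
def orbitSet (H : Type*) [Group H] [MulAction H V] (R : Set V) : Set V :=
  {x | ∃ h : H, ∃ ρ ∈ R, x = h • ρ}

/-- The geometric realization of the flag complex of `G` inside `ℝ^V`: the union over
all (nonempty) cliques of the convex hulls of the corresponding standard basis vectors. -/
def flagRealization [DecidableEq V] (G : SimpleGraph V) : Set (V → ℝ) :=
  ⋃ (Δ : Set V) (_ : Δ.Nonempty) (_ : G.IsClique Δ),
    convexHull ℝ ((fun v => (Pi.single v 1 : V → ℝ)) '' Δ)

/-- A walk is a geodesic if its length equals the distance between its endpoints. -/
def IsGeodesic (G : SimpleGraph V) {u v : V} (p : G.Walk u v) : Prop :=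
  p.length = G.dist u v

/-- `G` is `δ`-hyperbolic: for any geodesic triangle, each vertex on one side is within
distance `δ` of some vertex on the union of the other two sides. -/
def Hyperbolic (G : SimpleGraph V) (δ : ℕ) : Prop :=
  ∀ (u v w : V) (p : G.Walk u v) (q : G.Walk v w) (r : G.Walk w u),
    IsGeodesic G p → IsGeodesic G q → IsGeodesic G r →
    ∀ t ∈ p.support, ∃ s, (s ∈ q.support ∨ s ∈ r.support) ∧ G.dist t s ≤ δ

/-- The Rips graph `Γ_D`: same vertices, two distinct vertices adjacent iff their
graph distance in `G` is at most `D`. -/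
def ripsGraph (G : SimpleGraph V) (D : ℕ) : SimpleGraph V where
  Adj u v := u ≠ v ∧ G.dist u v ≤ D
  symm := by
    constructor
    intro u v h
    exact ⟨h.1.symm, by rw [SimpleGraph.dist_comm]; exact h.2⟩
  loopless := by
    constructor
    intro v h
    exact h.1 rfl

/-- The ball of radius `r` around a set `C` of vertices. -/
def ballSet (G : SimpleGraph V) (C : Set V) (r : ℕ) : Set V :=
  {v | ∃ c ∈ C, G.dist v c ≤ r}



lemma mem_closedNbhd_self (G : SimpleGraph V) (v : V) : v ∈ closedNbhd G v :=
  Set.mem_insert _ _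

lemma closedNbhd_comm {G : SimpleGraph V} {v w : V} :
    w ∈ closedNbhd G v ↔ v ∈ closedNbhd G w := by
  simp only [closedNbhd, Set.mem_insert_iff, Set.mem_setOf_eq]
  constructor
  · rintro (rfl | h)
    · exact Or.inl rfl
    · exact Or.inr h.symm
  · rintro (rfl | h)
    · exact Or.inl rfl
    · exact Or.inr h.symm

def GoodList (G : SimpleGraph V) (l : List V) : Prop :=
  ∀ (i : ℕ) (h : i < l.length), i < l.length - 1 →
    ∃ π, DominatedIn G {w | w ∈ l.drop i} (l[i]'h) π

lemma goodList_of_short {G : SimpleGraph V} {l : List V} (h : l.length ≤ 1) :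
    GoodList G l := fun _ _ hi => absurd hi (by omega)

lemma GoodList.tail {G : SimpleGraph V} {a : V} {t : List V}
    (hg : GoodList G (a :: t)) : GoodList G t := by
  intro i h hi
  have h' : i + 1 < (a :: t).length := by simp only [List.length_cons]; omega
  obtain ⟨π, hπ⟩ := hg (i + 1) h' (by simp only [List.length_cons]; omega)
  refine ⟨π, ?_⟩
  simpa only [List.getElem_cons_succ, List.drop_succ_cons] using hπ

lemma GoodList.cons {G : SimpleGraph V} {a : V} {t : List V}
    (hg : GoodList G t) (hd : ∃ π, DominatedIn G {w | w ∈ a :: t} a π) :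
    GoodList G (a :: t) := by
  intro i h hi
  cases i with
  | zero => simpa using hd
  | succ i =>
    have h' : i < t.length := by simp only [List.length_cons] at h; omega
    obtain ⟨π, hπ⟩ := hg i h' (by simp only [List.length_cons] at hi ⊢; omega)
    exact ⟨π, by simpa only [List.getElem_cons_succ, List.drop_succ_cons] using hπ⟩

lemma transGen_chain {r : V → V → Prop} {a b : V} (h : Relation.TransGen r a b) :
    ∃ m : ℕ, 0 < m ∧ ∃ g : ℕ → V, g 0 = a ∧ g m = b ∧ ∀ i < m, r (g i) (g (i + 1)) := by
  induction h with
  | @single c hac =>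
    refine ⟨1, one_pos, fun n => if n = 0 then a else c, by simp, by simp, ?_⟩
    intro i hi
    have : i = 0 := by omega
    subst this
    simpa using hac
  | @tail b c hab hbc ih =>
    obtain ⟨m, hm, g, hg0, hgm, hstep⟩ := ih
    have hnle : ¬ (m + 1 ≤ m) := by omega
    refine ⟨m + 1, by omega, fun n => if n ≤ m then g n else c, by simp [hg0],
      by simp [hnle], ?_⟩
    intro i hi
    by_cases him : i < m
    · have h1 : i ≤ m := by omega
      have h2 : i + 1 ≤ m := by omega
      simpa [h1, h2] using hstep i him
    · have : i = m := by omega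
      subst this
      simpa [hnle, hgm] using hbc

def chaseRel (σ : V) (Pr : V → Finset (Sym2 V)) (R : Set V) : V → V → Prop :=
  fun a b => b ≠ σ ∧ a ∈ PiStar Pr b ∧ a ∈ R ∧ b ∈ R

lemma no_transGen_self {G : SimpleGraph V} {σ : V} {Pr : V → Finset (Sym2 V)} {R : Set V}
    (hPr : IsSigmaProjection G σ Pr) (a : V) :
    ¬ Relation.TransGen (chaseRel σ Pr R) a a := by
  intro h
  obtain ⟨m, hm, g, hg0, hgm, hstep⟩ := transGen_chain h
  haveI : NeZero m := ⟨hm.ne'⟩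
  have hg0m : g 0 = g m := by rw [hg0, hgm]
  have hne : ∀ j ≤ m, g j ≠ σ := by
    intro j hj
    rcases Nat.eq_zero_or_pos j with rfl | hj0
    · rw [hg0m]
      have := (hstep (m - 1) (by omega)).1
      rwa [Nat.sub_add_cancel hm] at this
    · have := (hstep (j - 1) (by omega)).1
      rwa [Nat.sub_add_cancel hj0] at this
  refine hPr.acyclic ⟨m, hm, fun k => g (m - k.val), fun i => ?_⟩
  have hival : i.val < m := ZMod.val_lt i
  refine ⟨hne (m - i.val) (by omega), ?_⟩
  have hval : (i + 1).val = (i.val + 1) % m := by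
    rw [ZMod.val_add, ZMod.val_one_eq_one_mod, Nat.add_mod i.val 1 m,
      Nat.mod_eq_of_lt hival]
  by_cases hc : i.val + 1 = m
  · have hv0 : (i + 1).val = 0 := by rw [hval, hc, Nat.mod_self]
    have e1 : m - (i + 1).val = m := by rw [hv0]; omega
    have e2 : m - i.val = 1 := by omega
    show g (m - (i + 1).val) ∈ PiStar Pr (g (m - i.val))
    rw [e1, e2, ← hg0m, hg0]
    have := (hstep 0 hm).2.1
    rwa [hg0] at this
  · have hv1 : (i + 1).val = i.val + 1 := by
      rw [hval]; exact Nat.mod_eq_of_lt (by omega)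
    have hlt : m - (i + 1).val < m := by omega
    have e : m - (i + 1).val + 1 = m - i.val := by omega
    show g (m - (i + 1).val) ∈ PiStar Pr (g (m - i.val))
    have := (hstep (m - (i + 1).val) hlt).2.1
    rwa [e] at this

lemma chaseRel_wf {G : SimpleGraph V} {σ : V} {Pr : V → Finset (Sym2 V)} {R : Set V}
    (hPr : IsSigmaProjection G σ Pr) (hfin : R.Finite) :
    WellFounded (chaseRel σ Pr R) := by
  haveI := hfin.to_subtype
  set r' : R → R → Prop := fun x y => chaseRel σ Pr R x.1 y.1 with hr'
  haveI : IsTrans R (Relation.TransGen r') := ⟨fun _ _ _ => Relation.TransGen.trans⟩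
  haveI : IsIrrefl R (Relation.TransGen r') := by
    refine ⟨fun x hx => no_transGen_self (R := R) hPr x.1 ?_⟩
    exact Relation.TransGen.lift Subtype.val (fun _ _ h => h) _ _ hx
  have hwf1 : WellFounded (Relation.TransGen r') :=
    Finite.wellFounded_of_trans_of_irrefl _
  have hwf2 : WellFounded r' :=
    Subrelation.wf (fun {a b} h => Relation.TransGen.single h) hwf1
  have key : ∀ x : R, Acc (chaseRel σ Pr R) x.1 := by
    intro x
    refine WellFounded.induction hwf2 x (C := fun x => Acc (chaseRel σ Pr R) x.1) ?_
    intro y ih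
    exact Acc.intro y.1 (fun z hz => ih ⟨z, hz.2.2.1⟩ hz)
  constructor
  intro a
  by_cases ha : a ∈ R
  · exact key ⟨a, ha⟩
  · exact Acc.intro a (fun y hy => absurd hy.2.2.2 ha)

lemma sigma_mem {G : SimpleGraph V} {σ : V} {Pr : V → Finset (Sym2 V)}
    (hPr : IsSigmaProjection G σ Pr) {R : Set V} (hfin : R.Finite)
    (hne : R.Nonempty) (hconv : PiConvex σ Pr R) : σ ∈ R := by
  obtain ⟨x, hx⟩ := hne
  by_cases hxσ : x = σ
  · rwa [← hxσ]
  have main : ∀ y, y ∈ R ∧ y ≠ σ → σ ∈ R := by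
    intro y
    refine WellFounded.induction (chaseRel_wf hPr hfin) y
      (C := fun y => y ∈ R ∧ y ≠ σ → σ ∈ R) ?_
    rintro z ih ⟨hzR, hzσ⟩
    obtain ⟨p, hp⟩ := hPr.nonempty z hzσ
    obtain ⟨w, hwp, hwR⟩ := hconv z hzR hzσ p hp
    by_cases hwσ : w = σ
    · exact hwσ ▸ hwR
    · exact ih w ⟨hzσ, ⟨p, hp, hwp⟩, hwR, hzR⟩ ⟨hwR, hwσ⟩
  exact main x ⟨hx, hxσ⟩

lemma chase {G : SimpleGraph V} {σ : V} {Pr : V → Finset (Sym2 V)} {R : Set V}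
    (hPr : IsSigmaProjection G σ Pr) (hfin : R.Finite)
    (S : Finset V) (ρ : V) (hρσ : ρ ≠ σ) (hσS : σ ∈ S)
    (HS : ∀ π ∈ R, π ∉ S → ∃ d ∈ R, d ∈ PiStar Pr π ∧
        ∀ w ∈ S, w ∈ closedNbhd G π → w ∈ closedNbhd G d) :
    ∀ π, π ∈ R → Relation.TransGen (chaseRel σ Pr R) π ρ →
      (∀ w ∈ S, w ∈ closedNbhd G ρ → w ∈ closedNbhd G π) →
      ∃ d, DominatedIn G ↑S ρ d := by
  intro π
  refine WellFounded.induction (chaseRel_wf hPr hfin) π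
    (C := fun π => π ∈ R → Relation.TransGen (chaseRel σ Pr R) π ρ →
      (∀ w ∈ S, w ∈ closedNbhd G ρ → w ∈ closedNbhd G π) →
      ∃ d, DominatedIn G ↑S ρ d) ?_
  intro x ih hxR htg hdom
  by_cases hxS : x ∈ S
  · by_cases hxρ : x = ρ
    · exact absurd (hxρ ▸ htg) (no_transGen_self hPr ρ)
    · exact ⟨x, Finset.mem_coe.2 hxS, hxρ,
        fun w hw hwN => hdom w (Finset.mem_coe.1 hw) hwN⟩
  · obtain ⟨d, hdR, hdPi, hdw⟩ := HS x hxR hxS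
    have hxσ : x ≠ σ := fun h => hxS (h ▸ hσS)
    have hrel : chaseRel σ Pr R d x := ⟨hxσ, hdPi, hdR, hxR⟩
    exact ih d hrel hdR (Relation.TransGen.head hrel htg)
      (fun w hwS hwN => hdw w hwS (hdom w hwS hwN))

lemma main_dismantle {G : SimpleGraph V} {σ : V} {Pr : V → Finset (Sym2 V)} {R : Set V}
    (hPr : IsSigmaProjection G σ Pr) (hfin : R.Finite) (hconv : PiConvex σ Pr R) :
    ∀ (n : ℕ) (S : Finset V), S.card ≤ n → ↑S ⊆ R → σ ∈ S →
      (∀ π ∈ R, π ∉ S → ∃ d ∈ R, d ∈ PiStar Pr π ∧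
          ∀ w ∈ S, w ∈ closedNbhd G π → w ∈ closedNbhd G d) →
      ∃ l : List V, l.Nodup ∧ (∀ x, x ∈ l ↔ x ∈ S) ∧ GoodList G l := by
  classical
  intro n
  induction n with
  | zero =>
    intro S hcard _ hσ _
    have := Finset.card_pos.2 ⟨σ, hσ⟩
    omega
  | succ n ih =>
    intro S hcard hsub hσ HS
    by_cases hex : ∃ ρ ∈ S, ρ ≠ σ
    · obtain ⟨ρ, hρS, hρσ, p, hp, hexp⟩ := hPr.exposed S hex
      have hρR : ρ ∈ R := hsub (Finset.mem_coe.2 hρS)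
      obtain ⟨π₁, hπ₁p, hπ₁R⟩ := hconv ρ hρR hρσ p hp
      have hdom0 : ∀ w ∈ S, w ∈ closedNbhd G ρ → w ∈ closedNbhd G π₁ := hexp π₁ hπ₁p
      have htg : Relation.TransGen (chaseRel σ Pr R) π₁ ρ :=
        Relation.TransGen.single ⟨hρσ, ⟨p, hp, hπ₁p⟩, hπ₁R, hρR⟩
      obtain ⟨d, hd⟩ := chase hPr hfin S ρ hρσ hσ HS π₁ hπ₁R htg hdom0
      have hσ' : σ ∈ S.erase ρ := Finset.mem_erase.2 ⟨fun h => hρσ h.symm, hσ⟩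
      have HS' : ∀ π ∈ R, π ∉ S.erase ρ → ∃ d ∈ R, d ∈ PiStar Pr π ∧
          ∀ w ∈ S.erase ρ, w ∈ closedNbhd G π → w ∈ closedNbhd G d := by
        intro π hπR hπ
        by_cases hπρ : π = ρ
        · subst hπρ
          exact ⟨π₁, hπ₁R, ⟨p, hp, hπ₁p⟩,
            fun w hw => hexp π₁ hπ₁p w (Finset.mem_of_mem_erase hw)⟩
        · have hπS : π ∉ S := fun h => hπ (Finset.mem_erase.2 ⟨hπρ, h⟩)
          obtain ⟨d', h1, h2, h3⟩ := HS π hπR hπS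
          exact ⟨d', h1, h2, fun w hw => h3 w (Finset.mem_of_mem_erase hw)⟩
      have hcard' : (S.erase ρ).card ≤ n := by
        have := Finset.card_erase_of_mem hρS
        have := Finset.card_pos.2 ⟨ρ, hρS⟩
        omega
      have hsub' : ↑(S.erase ρ) ⊆ R := fun x hx =>
        hsub (Finset.mem_coe.2 (Finset.mem_of_mem_erase (Finset.mem_coe.1 hx)))
      obtain ⟨l', hn', hm', hg'⟩ := ih (S.erase ρ) hcard' hsub' hσ' HS'
      have hmemiff : ∀ x, (x ∈ ρ :: l') ↔ x ∈ S := by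
        intro x
        simp only [List.mem_cons, hm', Finset.mem_erase]
        constructor
        · rintro (rfl | ⟨_, h⟩)
          · exact hρS
          · exact h
        · intro hx
          by_cases hxρ : x = ρ
          · exact Or.inl hxρ
          · exact Or.inr ⟨hxρ, hx⟩
      refine ⟨ρ :: l', ?_, hmemiff, ?_⟩
      · exact List.nodup_cons.2
          ⟨fun h => (Finset.mem_erase.1 ((hm' ρ).1 h)).1 rfl, hn'⟩
      · refine GoodList.cons hg' ⟨d, ?_⟩
        have hset : {w | w ∈ ρ :: l'} = (↑S : Set V) := by
          ext x
          simp only [Set.mem_setOf_eq, Finset.mem_coe]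
          exact hmemiff x
        rw [hset]
        exact hd
    · push_neg at hex
      refine ⟨[σ], List.nodup_singleton σ, ?_, goodList_of_short (by simp)⟩
      intro x
      simp only [List.mem_singleton]
      exact ⟨fun h => h ▸ hσ, fun h => hex x h⟩

lemma goodlist_swap (G : SimpleGraph V) {a v : V} (hav : a ≠ v) {S : Set V}
    (ha : a ∈ S) (hv : v ∈ S)
    (h1 : ∀ x ∈ S, x ∈ closedNbhd G a → x ∈ closedNbhd G v)
    (h2 : ∀ x ∈ S, x ∈ closedNbhd G v → x ∈ closedNbhd G a)
    {t : List V} (hn : t.Nodup) (hmem : ∀ x, x ∈ t ↔ x ∈ S ∧ x ≠ a)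
    (hg : GoodList G t) :
    ∃ l' : List V, l'.Nodup ∧ (∀ x, x ∈ l' ↔ x ∈ S ∧ x ≠ v) ∧ GoodList G l' := by
  classical
  set f : V → V := fun x => if x = v then a else x with hf
  have hkey : ∀ x ∈ S, ∀ y ∈ S, (f x ∈ closedNbhd G (f y) ↔ x ∈ closedNbhd G y) := by
    intro x hx y hy
    by_cases hxv : x = v
    · by_cases hyv : y = v
      · rw [hxv, hyv]
        simp only [hf, if_pos rfl]
        exact iff_of_true (mem_closedNbhd_self G a) (mem_closedNbhd_self G v)
      · rw [hxv]
        simp only [hf, if_pos rfl, if_neg hyv]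
        constructor
        · intro h
          exact closedNbhd_comm.1 (h1 y hy (closedNbhd_comm.2 h))
        · intro h
          exact closedNbhd_comm.1 (h2 y hy (closedNbhd_comm.2 h))
    · by_cases hyv : y = v
      · rw [hyv]
        simp only [hf, if_pos rfl, if_neg hxv]
        exact ⟨fun h => h1 x hx h, fun h => h2 x hx h⟩
      · simp only [hf, if_neg hxv, if_neg hyv]
  have hmemmap : ∀ x, x ∈ t.map f ↔ x ∈ S ∧ x ≠ v := by
    intro x
    simp only [List.mem_map]
    constructor
    · rintro ⟨y, hy, rfl⟩
      obtain ⟨hyS, hya⟩ := (hmem y).1 hy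
      by_cases hyv : y = v
      · subst hyv
        simp only [hf, if_pos rfl]
        exact ⟨ha, hav⟩
      · simp only [hf, if_neg hyv]
        exact ⟨hyS, hyv⟩
    · rintro ⟨hxS, hxv⟩
      by_cases hxa : x = a
      · refine ⟨v, (hmem v).2 ⟨hv, fun h => hav h.symm⟩, ?_⟩
        simp only [hf, if_pos rfl]
        exact hxa.symm
      · exact ⟨x, (hmem x).2 ⟨hxS, hxa⟩, by simp only [hf, if_neg hxv]⟩
  have hinj : ∀ x ∈ t, ∀ y ∈ t, f x = f y → x = y := by
    intro x hx y hy hfxy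
    have hxa := ((hmem x).1 hx).2
    have hya := ((hmem y).1 hy).2
    by_cases hxv : x = v <;> by_cases hyv : y = v
    · rw [hxv, hyv]
    · exfalso
      rw [hf] at hfxy
      simp only [if_pos hxv, if_neg hyv] at hfxy
      exact hya hfxy.symm
    · exfalso
      rw [hf] at hfxy
      simp only [if_pos hyv, if_neg hxv] at hfxy
      exact hxa hfxy
    · rw [hf] at hfxy
      simpa only [if_neg hxv, if_neg hyv] using hfxy
  refine ⟨t.map f, hn.map_on hinj, hmemmap, ?_⟩
  intro i h hi
  have ht : i < t.length := by simpa using h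
  obtain ⟨π, hπmem, hπne, hπdom⟩ := hg i ht (by simp only [List.length_map] at hi ⊢; omega)
  have hπt : π ∈ t := List.drop_subset _ _ hπmem
  have hρt : t[i] ∈ t := List.getElem_mem ht
  have hπS : π ∈ S := ((hmem π).1 hπt).1
  have hρS : t[i] ∈ S := ((hmem _).1 hρt).1
  have hget : (t.map f)[i]'h = f (t[i]'ht) := List.getElem_map f
  have hdropmap : (t.map f).drop i = (t.drop i).map f := List.map_drop.symm
  refine ⟨f π, ?_, ?_, ?_⟩
  · show f π ∈ {w | w ∈ (t.map f).drop i}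
    rw [hdropmap]
    exact List.mem_map_of_mem hπmem
  · rw [hget]
    intro hc
    exact hπne (hinj π hπt (t[i]'ht) hρt hc)
  · intro w hw hwN
    rw [hdropmap] at hw
    obtain ⟨y, hy, rfl⟩ := List.mem_map.1 hw
    have hyS : y ∈ S := ((hmem y).1 (List.drop_subset _ _ hy)).1
    rw [hget] at hwN
    have h1' : y ∈ closedNbhd G (t[i]'ht) := (hkey y hyS _ hρS).1 hwN
    exact (hkey y hyS π hπS).2 (hπdom y hy h1')

lemma goodlist_remove (G : SimpleGraph V) :
    ∀ l : List V, l.Nodup → GoodList G l → ∀ v ∈ l,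
      (∃ u, DominatedIn G {w | w ∈ l} v u) →
      ∃ l', l'.Nodup ∧ (∀ x, x ∈ l' ↔ x ∈ l ∧ x ≠ v) ∧ GoodList G l' := by
  intro l
  induction l with
  | nil => intro _ _ v hv; exact absurd hv List.not_mem_nil
  | cons a t ih =>
    intro hn hg v hv hdom
    obtain ⟨hat, hnt⟩ := List.nodup_cons.1 hn
    have hmemt : ∀ x, x ∈ t ↔ (x ∈ a :: t ∧ x ≠ a) := by
      intro x
      constructor
      · exact fun hx => ⟨List.mem_cons_of_mem _ hx, fun h => hat (h ▸ hx)⟩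
      · rintro ⟨hx, hxa⟩
        exact (List.mem_cons.1 hx).resolve_left hxa
    by_cases hva : v = a
    · subst hva
      exact ⟨t, hnt, fun x => (hmemt x), hg.tail⟩
    · have hvt : v ∈ t := (List.mem_cons.1 hv).resolve_left hva
      have htne : t ≠ [] := List.ne_nil_of_mem hvt
      have hlen : 0 < (a :: t).length - 1 := by
        simp only [List.length_cons]
        have := List.length_pos_iff.2 htne
        omega
      obtain ⟨u₁, hu₁⟩ := hg 0 (by simp) hlen
      simp only [List.drop_zero, List.getElem_cons_zero] at hu₁
      obtain ⟨hu₁mem, hu₁ne, hu₁dom⟩ := hu₁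
      obtain ⟨w₀, hw₀mem, hw₀ne, hw₀dom⟩ := hdom
      have hamem : a ∈ ({w | w ∈ a :: t} : Set V) := List.mem_cons_self
      have hvmem : v ∈ ({w | w ∈ a :: t} : Set V) := hv
      by_cases hcase : w₀ = a ∧ u₁ = v
      · -- twins: swap
        obtain ⟨hw0a, hu1v⟩ := hcase
        have h1 : ∀ x ∈ ({w | w ∈ a :: t} : Set V),
            x ∈ closedNbhd G a → x ∈ closedNbhd G v := by
          intro x hx hxa'
          have := hu₁dom x hx hxa'
          rwa [hu1v] at this
        have h2 : ∀ x ∈ ({w | w ∈ a :: t} : Set V),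
            x ∈ closedNbhd G v → x ∈ closedNbhd G a := by
          intro x hx hxv'
          have := hw₀dom x hx hxv'
          rwa [hw0a] at this
        obtain ⟨l', hn', hm', hg'⟩ := goodlist_swap G (fun h => hva h.symm)
          hamem hvmem h1 h2 hnt (fun x => hmemt x) hg.tail
        exact ⟨l', hn', fun x => hm' x, hg'⟩
      · -- non-twin case
        have hmain : (∃ dv, DominatedIn G {w | w ∈ t} v dv) ∧
            (∃ da, da ∈ t ∧ da ≠ v ∧ da ≠ a ∧
              ∀ x ∈ ({w | w ∈ a :: t} : Set V),
                x ∈ closedNbhd G a → x ∈ closedNbhd G da) := by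
          by_cases hw0a : w₀ = a
          · have hu1v : u₁ ≠ v := by
              intro h
              exact hcase ⟨hw0a, h⟩
            have hu₁t : u₁ ∈ t := (hmemt u₁).2 ⟨hu₁mem, hu₁ne⟩
            constructor
            · refine ⟨u₁, hu₁t, hu1v, ?_⟩
              intro x hx hxN
              have hx' : x ∈ ({w | w ∈ a :: t} : Set V) := List.mem_cons_of_mem _ hx
              have := hw₀dom x hx' hxN
              rw [hw0a] at this
              exact hu₁dom x hx' this
            · exact ⟨u₁, hu₁t, hu1v, hu₁ne, fun x hx hxN => hu₁dom x hx hxN⟩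
          · have hw₀t : w₀ ∈ t := (hmemt w₀).2 ⟨hw₀mem, hw0a⟩
            constructor
            · refine ⟨w₀, hw₀t, hw₀ne, ?_⟩
              intro x hx hxN
              exact hw₀dom x (List.mem_cons_of_mem _ hx) hxN
            · by_cases hu1v : u₁ = v
              · refine ⟨w₀, hw₀t, hw₀ne, hw0a, ?_⟩
                intro x hx hxN
                have := hu₁dom x hx hxN
                rw [hu1v] at this
                exact hw₀dom x hx this
              · have hu₁t : u₁ ∈ t := (hmemt u₁).2 ⟨hu₁mem, hu₁ne⟩
                exact ⟨u₁, hu₁t, hu1v, hu₁ne, fun x hx hxN => hu₁dom x hx hxN⟩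
        obtain ⟨⟨dv, hdv⟩, ⟨da, hdat, hdav, hdaa, hdadom⟩⟩ := hmain
        obtain ⟨l'', hn'', hm'', hg''⟩ := ih hnt hg.tail v hvt ⟨dv, hdv⟩
        have hmemres : ∀ x, x ∈ a :: l'' ↔ x ∈ a :: t ∧ x ≠ v := by
          intro x
          simp only [List.mem_cons, hm'']
          constructor
          · rintro (rfl | ⟨hx, hxv⟩)
            · exact ⟨Or.inl rfl, fun h => hva h.symm⟩
            · exact ⟨Or.inr hx, hxv⟩
          · rintro ⟨(rfl | hx), hxv⟩
            · exact Or.inl rfl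
            · exact Or.inr ⟨hx, hxv⟩
        refine ⟨a :: l'', ?_, hmemres, ?_⟩
        · refine List.nodup_cons.2 ⟨fun h => ?_, hn''⟩
          exact hat ((hm'' a).1 h).1
        · refine GoodList.cons hg'' ⟨da, ?_, hdaa, ?_⟩
          · show da ∈ ({w | w ∈ a :: l''} : Set V)
            exact List.mem_cons_of_mem _ ((hm'' da).2 ⟨hdat, hdav⟩)
          · intro x hx hxN
            have hx' : x ∈ ({w | w ∈ a :: t} : Set V) := by
              have := (hmemres x).1 hx
              exact this.1
            exact hdadom x hx' hxN

def DismantlableOn' (G : SimpleGraph V) (S : Set V) : Prop :=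
  ∃ l : List V, l.Nodup ∧ (∀ v, v ∈ l ↔ v ∈ S) ∧ GoodList G l

lemma dismantle_erase (G : SimpleGraph V) [DecidableEq V] (S : Finset V) (v : V) (hv : v ∈ S)
    (hd : ∃ u, DominatedIn G ↑S v u) (h : DismantlableOn' G ↑S) :
    DismantlableOn' G ↑(S.erase v) := by
  obtain ⟨l, hn, hm, hg⟩ := h
  have hset : {w | w ∈ l} = (↑S : Set V) := Set.ext fun x => hm x
  rw [← hset] at hd
  obtain ⟨l', hn', hm', hg'⟩ := goodlist_remove G l hn hg v ((hm v).2 hv)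
    hd
  refine ⟨l', hn', fun x => ?_, hg'⟩
  rw [hm' x]
  simp only [Finset.coe_erase, Set.mem_diff, Set.mem_singleton_iff]
  constructor
  · rintro ⟨h1, h2⟩
    exact ⟨(hm x).1 h1, h2⟩
  · rintro ⟨h1, h2⟩
    exact ⟨(hm x).2 h1, h2⟩

lemma complete_of_allmax (G : SimpleGraph V) :
    ∀ l : List V, l.Nodup → GoodList G l →
      ∀ S : Set V, (∀ x, x ∈ l ↔ x ∈ S) →
      (∀ a ∈ S, ∀ b ∈ S, (∀ w ∈ S, w ∈ closedNbhd G a → w ∈ closedNbhd G b) →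
        (∀ w ∈ S, w ∈ closedNbhd G b → w ∈ closedNbhd G a)) →
      ∀ a ∈ S, ∀ b ∈ S, a ≠ b → G.Adj a b := by
  intro l
  induction l with
  | nil =>
    intro _ _ S hm _ a ha
    exact absurd ((hm a).2 ha) List.not_mem_nil
  | cons c t ih =>
    intro hn hg S hm hmax a ha b hb hab
    obtain ⟨hct, hnt⟩ := List.nodup_cons.1 hn
    by_cases ht : t = []
    · subst ht
      have ha' : a = c := by
        have := (hm a).2 ha
        simpa using this
      have hb' : b = c := by
        have := (hm b).2 hb
        simpa using this
      exact absurd (ha'.trans hb'.symm) hab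
    · have hlen : 0 < (c :: t).length - 1 := by
        simp only [List.length_cons]
        have := List.length_pos_iff.2 ht
        omega
      obtain ⟨u, hu⟩ := hg 0 (by simp) hlen
      simp only [List.drop_zero, List.getElem_cons_zero] at hu
      obtain ⟨humem, hune, hudom⟩ := hu
      have hcS : c ∈ S := (hm c).1 List.mem_cons_self
      have huS : u ∈ S := (hm u).1 humem
      have hudomS : ∀ w ∈ S, w ∈ closedNbhd G c → w ∈ closedNbhd G u := by
        intro w hw
        exact hudom w ((hm w).2 hw)
      have hrev : ∀ w ∈ S, w ∈ closedNbhd G u → w ∈ closedNbhd G c :=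
        hmax c hcS u huS hudomS
      set S' : Set V := S \ {c} with hS'
      have hmt : ∀ x, x ∈ t ↔ x ∈ S' := by
        intro x
        constructor
        · intro hx
          exact ⟨(hm x).1 (List.mem_cons_of_mem _ hx), fun h => hct (h ▸ hx)⟩
        · rintro ⟨hxS, hxc⟩
          have := (hm x).2 hxS
          exact (List.mem_cons.1 this).resolve_left hxc
      have huS' : u ∈ S' := ⟨huS, hune⟩
      have hmax' : ∀ x ∈ S', ∀ y ∈ S',
          (∀ w ∈ S', w ∈ closedNbhd G x → w ∈ closedNbhd G y) →
          (∀ w ∈ S', w ∈ closedNbhd G y → w ∈ closedNbhd G x) := by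
        rintro x ⟨hxS, hxc⟩ y ⟨hyS, hyc⟩ hxy
        have hxyS : ∀ w ∈ S, w ∈ closedNbhd G x → w ∈ closedNbhd G y := by
          intro w hwS hwN
          by_cases hwc : w = c
          · subst hwc
            have h1 : x ∈ closedNbhd G w := closedNbhd_comm.2 hwN
            have h2 : x ∈ closedNbhd G u := hudomS x hxS h1
            have h3 : u ∈ closedNbhd G x := closedNbhd_comm.2 h2
            have h4 : u ∈ closedNbhd G y := hxy u huS' h3
            have h5 : y ∈ closedNbhd G u := closedNbhd_comm.2 h4
            have h6 : y ∈ closedNbhd G w := hrev y hyS h5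
            exact closedNbhd_comm.2 h6
          · exact hxy w ⟨hwS, hwc⟩ hwN
        intro w hw hwN
        exact hmax x hxS y hyS hxyS w hw.1 hwN
      have IH := ih hnt hg.tail S' hmt hmax'
      have key : ∀ x ∈ S, x ≠ c → G.Adj c x := by
        intro x hxS hxc
        by_cases hxu : x = u
        · subst hxu
          have : x ∈ closedNbhd G c := hrev x hxS (mem_closedNbhd_self G x)
          rcases this with h | h
          · exact absurd h hxc
          · exact h
        · have hadj : G.Adj u x := IH u huS' x ⟨hxS, hxc⟩ (fun h => hxu h.symm)
          have h1 : x ∈ closedNbhd G u := Or.inr hadj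
          have h2 : x ∈ closedNbhd G c := hrev x hxS h1
          rcases h2 with h | h
          · exact absurd h hxc
          · exact h
      by_cases hac : a = c
      · subst hac
        exact key b hb (fun h => hab h.symm)
      · by_cases hbc : b = c
        · subst hbc
          exact (key a ha hac).symm
        · exact IH a ⟨ha, hac⟩ b ⟨hb, hbc⟩ hab

lemma cliqueK {H : Type*} [Group H] [MulAction H V] (G : SimpleGraph V)
    (hact : ∀ (h : H) (u v : V), G.Adj (h • u) (h • v) ↔ G.Adj u v) :
    ∀ (n : ℕ) (S : Finset V), S.card ≤ n → S.Nonempty →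
      (∀ (h : H) (x : V), x ∈ S ↔ h • x ∈ S) → DismantlableOn' G ↑S →
      ∃ Δ : Set V, Δ.Nonempty ∧ G.IsClique Δ ∧ ∀ (h : H) (x : V), x ∈ Δ ↔ h • x ∈ Δ := by
  classical
  have hNsmul : ∀ (h : H) (x w : V), w ∈ closedNbhd G x ↔ h • w ∈ closedNbhd G (h • x) := by
    intro h x w
    simp only [closedNbhd, Set.mem_insert_iff, Set.mem_setOf_eq, hact]
    constructor
    · rintro (rfl | hA)
      · exact Or.inl rfl
      · exact Or.inr hA
    · rintro (hE | hA)
      · exact Or.inl (smul_left_cancel h hE)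
      · exact Or.inr hA
  intro n
  induction n with
  | zero =>
    intro S hcard hne
    obtain ⟨x, hx⟩ := hne
    have := Finset.card_pos.2 ⟨x, hx⟩
    omega
  | succ n ih =>
    intro S hcard hne hinv hdis
    set dm : V → V → Prop := fun x y => ∀ w ∈ S, w ∈ closedNbhd G x → w ∈ closedNbhd G y
      with hdm
    set X : Finset V := S.filter (fun x => ∃ u ∈ S, dm x u ∧ ¬ dm u x) with hX
    by_cases hXe : X = ∅
    · -- all maximal: S is a clique
      have hmax : ∀ a ∈ (↑S : Set V), ∀ b ∈ (↑S : Set V),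
          (∀ w ∈ (↑S : Set V), w ∈ closedNbhd G a → w ∈ closedNbhd G b) →
          (∀ w ∈ (↑S : Set V), w ∈ closedNbhd G b → w ∈ closedNbhd G a) := by
        intro a ha b hb hab
        by_contra hcon
        have haX : a ∈ X := by
          refine Finset.mem_filter.2 ⟨Finset.mem_coe.1 ha, b, Finset.mem_coe.1 hb, ?_, ?_⟩
          · intro w hw; exact hab w (Finset.mem_coe.2 hw)
          · intro hc
            exact hcon (fun w hw => hc w (Finset.mem_coe.1 hw))
        rw [hXe] at haX
        exact absurd haX (Finset.notMem_empty a)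
      obtain ⟨l, hn, hm, hg⟩ := hdis
      refine ⟨↑S, ⟨hne.choose, Finset.mem_coe.2 hne.choose_spec⟩, ?_, fun h x => hinv h x⟩
      intro a ha b hb hab
      exact complete_of_allmax G l hn hg ↑S hm hmax a ha b hb hab
    · have hXne : X.Nonempty := Finset.nonempty_of_ne_empty hXe
      -- maximal dominator lemma
      have hmaxd : ∀ v ∈ S, ∃ u ∈ S, dm v u ∧ u ∉ X := by
        intro v hvS
        set T : Finset V := S.filter (fun u => dm v u) with hT
        have hTne : T.Nonempty := ⟨v, Finset.mem_filter.2 ⟨hvS, fun w _ hw => hw⟩⟩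
        obtain ⟨u, huT, humax⟩ :=
          T.exists_max_image (fun u => (S.filter (· ∈ closedNbhd G u)).card) hTne
        obtain ⟨huS, hvu⟩ := Finset.mem_filter.1 huT
        refine ⟨u, huS, hvu, ?_⟩
        intro huX
        obtain ⟨_, z, hzS, huz, hnzu⟩ := Finset.mem_filter.1 huX
        have hvz : dm v z := fun w hw hwN => huz w hw (hvu w hw hwN)
        have hzT : z ∈ T := Finset.mem_filter.2 ⟨hzS, hvz⟩
        have hsub : S.filter (· ∈ closedNbhd G u) ⊆ S.filter (· ∈ closedNbhd G z) := by
          intro w hw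
          obtain ⟨hwS, hwN⟩ := Finset.mem_filter.1 hw
          exact Finset.mem_filter.2 ⟨hwS, huz w hwS hwN⟩
        have hwit : ∃ w, w ∈ S.filter (· ∈ closedNbhd G z) ∧
            w ∉ S.filter (· ∈ closedNbhd G u) := by
          have hnzu' : ¬ ∀ w ∈ S, w ∈ closedNbhd G z → w ∈ closedNbhd G u := hnzu
          push_neg at hnzu'
          obtain ⟨w, hwS, hwNz, hwNu⟩ := hnzu'
          exact ⟨w, Finset.mem_filter.2 ⟨hwS, hwNz⟩,
            fun hc => hwNu (Finset.mem_filter.1 hc).2⟩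
        obtain ⟨w, hw1, hw2⟩ := hwit
        have hss : S.filter (· ∈ closedNbhd G u) ⊂ S.filter (· ∈ closedNbhd G z) :=
          ⟨hsub, fun hc => hw2 (hc hw1)⟩
        have := Finset.card_lt_card hss
        have := humax z hzT
        omega
      set S' : Finset V := S \ X with hS'
      have hS'ne : S'.Nonempty := by
        obtain ⟨v, hv⟩ := hne
        obtain ⟨u, huS, _, huX⟩ := hmaxd v hv
        exact ⟨u, Finset.mem_sdiff.2 ⟨huS, huX⟩⟩
      -- equivariance
      have hdomeq : ∀ (h : H) (x y : V), dm x y → dm (h • x) (h • y) := by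
        intro h x y hd w hwS hwN
        have hw' : (h⁻¹ • w) ∈ S := by
          have := (hinv h (h⁻¹ • w)).2
          rw [smul_inv_smul] at this
          exact this hwS
        have hwN' : h⁻¹ • w ∈ closedNbhd G x := by
          have := (hNsmul h x (h⁻¹ • w)).2
          rw [smul_inv_smul] at this
          exact this hwN
        have := hd (h⁻¹ • w) hw' hwN'
        have := (hNsmul h y (h⁻¹ • w)).1 this
        rwa [smul_inv_smul] at this
      have hXinv : ∀ (h : H) (x : V), x ∈ X ↔ h • x ∈ X := by
        have main : ∀ (h : H) (x : V), x ∈ X → h • x ∈ X := by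
          intro h x hxX
          obtain ⟨hxS, u, huS, hxu, hnux⟩ := Finset.mem_filter.1 hxX
          refine Finset.mem_filter.2 ⟨(hinv h x).1 hxS, h • u, (hinv h u).1 huS,
            hdomeq h x u hxu, ?_⟩
          intro hc
          apply hnux
          have := hdomeq h⁻¹ (h • u) (h • x) hc
          rwa [inv_smul_smul, inv_smul_smul] at this
        intro h x
        constructor
        · exact main h x
        · intro hc
          have := main h⁻¹ (h • x) hc
          rwa [inv_smul_smul] at this
      have hS'inv : ∀ (h : H) (x : V), x ∈ S' ↔ h • x ∈ S' := by
        intro h x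
        simp only [hS', Finset.mem_sdiff]
        rw [← hinv h x, ← hXinv h x]
      -- dismantlability of S'
      have hiter : ∀ Y : Finset V, Y ⊆ X → DismantlableOn' G ↑(S \ Y) := by
        intro Y
        induction Y using Finset.induction_on with
        | empty =>
          intro _
          simpa using hdis
        | @insert y Y hyY ihY =>
          intro hsub
          have hYX : Y ⊆ X := fun z hz => hsub (Finset.mem_insert_of_mem hz)
          have hyX : y ∈ X := hsub (Finset.mem_insert_self y Y)
          have hyS : y ∈ S := (Finset.mem_filter.1 hyX).1
          have hprev := ihY hYX
          have hyT : y ∈ S \ Y := Finset.mem_sdiff.2 ⟨hyS, hyY⟩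
          obtain ⟨u, huS, hyu, huX⟩ := hmaxd y hyS
          have hdomy : ∃ u', DominatedIn G ↑(S \ Y) y u' := by
            refine ⟨u, ?_, ?_, ?_⟩
            · exact Finset.mem_coe.2 (Finset.mem_sdiff.2 ⟨huS, fun hc => huX (hYX hc)⟩)
            · intro hc
              exact huX (hc ▸ hyX)
            · intro w hw hwN
              have hwS : w ∈ S := (Finset.mem_sdiff.1 (Finset.mem_coe.1 hw)).1
              exact hyu w hwS hwN
          have := dismantle_erase G (S \ Y) y hyT hdomy hprev
          have heq : (S \ Y).erase y = S \ insert y Y := by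
            ext z
            simp only [Finset.mem_erase, Finset.mem_sdiff, Finset.mem_insert]
            tauto
          rwa [heq] at this
      have hdis' : DismantlableOn' G ↑S' := hiter X (le_refl X)
      -- recurse
      have hcard' : S'.card ≤ n := by
        have hss : S' ⊂ S := by
          obtain ⟨x, hxX⟩ := hXne
          refine ⟨Finset.sdiff_subset, fun hc => ?_⟩
          have hxS : x ∈ S := (Finset.mem_filter.1 hxX).1
          have := Finset.mem_sdiff.1 (hc hxS)
          exact this.2 hxX
        have := Finset.card_lt_card hss
        omega
      exact ih S' hcard' hS'ne hS'inv hdis'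

lemma dismantlableOn_iff (G : SimpleGraph V) (S : Set V) :
    DismantlableOn G S ↔ DismantlableOn' G S := Iff.rfl

/-- Let `H` be a group acting on `Γ` by automorphisms. If there is a
`σ`-projection `Π_σ` and a nonempty finite `Π_σ`-convex `H`-invariant set `R`, then the
subgraph induced on `R` is dismantlable and `Γ` contains an `H`-invariant clique. -/
theorem invariant_clique_of_invariant_convex {V : Type*} {H : Type*} [Group H] [MulAction H V]
    (G : SimpleGraph V) (hact : ∀ (h : H) (u v : V), G.Adj (h • u) (h • v) ↔ G.Adj u v)
    (σ : V) (Pr : V → Finset (Sym2 V)) (hPr : IsSigmaProjection G σ Pr)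
    (R : Set V) (hfin : R.Finite) (hne : R.Nonempty) (hconv : PiConvex σ Pr R)
    (hinv : ∀ h : H, (fun v => h • v) '' R = R) :
    DismantlableOn G R ∧
      ∃ Δ : Set V, Δ.Nonempty ∧ G.IsClique Δ ∧ ∀ h : H, (fun v => h • v) '' Δ = Δ := by
  classical
  have hσR : σ ∈ R := sigma_mem hPr hfin hne hconv
  set S : Finset V := hfin.toFinset with hSdef
  have hmemS : ∀ x, x ∈ S ↔ x ∈ R := fun x => hfin.mem_toFinset
  have hsub : ↑S ⊆ R := fun x hx => (hmemS x).1 (Finset.mem_coe.1 hx)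
  obtain ⟨l, hn, hm, hg⟩ := main_dismantle hPr hfin hconv S.card S le_rfl hsub
    ((hmemS σ).2 hσR) (fun π hπR hπS => absurd ((hmemS π).2 hπR) hπS)
  have hdR : DismantlableOn' G R := ⟨l, hn, fun x => (hm x).trans (hmemS x), hg⟩
  refine ⟨(dismantlableOn_iff G R).2 hdR, ?_⟩
  have hinv' : ∀ (h : H) (x : V), x ∈ S ↔ h • x ∈ S := by
    intro h x
    rw [hmemS, hmemS]
    constructor
    · intro hx
      rw [← hinv h]
      exact ⟨x, hx, rfl⟩
    · intro hx
      rw [← hinv h] at hx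
      obtain ⟨y, hy, hyx⟩ := hx
      have : y = x := smul_left_cancel h hyx
      rwa [← this]
  have hdS : DismantlableOn' G ↑S := by
    have hc : (↑S : Set V) = R := hfin.coe_toFinset
    rw [hc]
    exact hdR
  obtain ⟨Δ, hΔne, hΔcl, hΔinv⟩ := cliqueK G hact S.card S le_rfl
    ⟨σ, (hmemS σ).2 hσR⟩ hinv' hdS
  refine ⟨Δ, hΔne, hΔcl, ?_⟩
  intro h
  ext x
  constructor
  · rintro ⟨y, hy, rfl⟩
    exact (hΔinv h y).1 hy
  · intro hx
    refine ⟨h⁻¹ • x, (hΔinv h⁻¹ x).1 hx, ?_⟩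
    simp
end

section
/- Let Γ be a finite dismantlable graph with vertex set V. Call two vertices σ, ρ equivalent if N(σ) = N(ρ), and let T ⊆ V be a set containing exactly one vertex from each equivalence class. Then the subgraph of Γ induced on T is dismantlable. -/
open SimpleGraph

variable {V : Type*}

-- auxiliary

lemma mem_closedNbhd' {G : SimpleGraph V} {u w : V} :
    w ∈ closedNbhd G u ↔ w = u ∨ G.Adj u w := Set.mem_insert_iff

lemma closedNbhd_self' (G : SimpleGraph V) (u : V) : u ∈ closedNbhd G u :=
  Set.mem_insert _ _

lemma closedNbhd_symm' {G : SimpleGraph V} {u w : V}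
    (h : w ∈ closedNbhd G u) : u ∈ closedNbhd G w := by
  rcases mem_closedNbhd'.mp h with rfl | h
  · exact closedNbhd_self' G _
  · exact mem_closedNbhd'.mpr (Or.inr h.symm)

def IsDL (G : SimpleGraph V) (l : List V) : Prop :=
  l.Nodup ∧ ∀ (i : ℕ) (h : i < l.length), i < l.length - 1 →
    ∃ π, DominatedIn G {w | w ∈ l.drop i} (l[i]'h) π

lemma isDL_tail {G : SimpleGraph V} {σ : V} {rest : List V}
    (h : IsDL G (σ :: rest)) : IsDL G rest := by
  refine ⟨h.1.of_cons, fun i hi hi' => ?_⟩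
  have h2 : i + 1 < (σ :: rest).length := by simp; omega
  have h3 : i + 1 < (σ :: rest).length - 1 := by simp; omega
  obtain ⟨π, hπ⟩ := h.2 (i + 1) h2 h3
  refine ⟨π, ?_⟩
  simpa [List.drop_succ_cons] using hπ

lemma isDL_swap [DecidableEq V] {G : SimpleGraph V} {l : List V} (hdl : IsDL G l) {a b : V}
    (ha : a ∈ l) (hb : b ∈ l)
    (htw : ∀ x ∈ l, x ∈ closedNbhd G a ↔ x ∈ closedNbhd G b) :
    IsDL G (l.map (Equiv.swap a b)) ∧
      ∀ v, v ∈ l.map (Equiv.swap a b) ↔ v ∈ l := by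
  set e := Equiv.swap a b with he
  have hS : ∀ v, v ∈ l → e v ∈ l := by
    intro v hv
    by_cases h1 : v = a
    · subst h1; rw [he, Equiv.swap_apply_left]; exact hb
    by_cases h2 : v = b
    · subst h2; rw [he, Equiv.swap_apply_right]; exact ha
    · rw [he, Equiv.swap_apply_of_ne_of_ne h1 h2]; exact hv
  have hmem : ∀ v, v ∈ l.map e ↔ v ∈ l := by
    intro v
    constructor
    · intro hv
      obtain ⟨x, hx, rfl⟩ := List.mem_map.mp hv
      exact hS x hx
    · intro hv
      exact List.mem_map.mpr ⟨e v, hS v hv, Equiv.swap_apply_self a b v⟩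
  have hom : ∀ u w, u ∈ l → w ∈ l → w ∈ closedNbhd G u →
      e w ∈ closedNbhd G (e u) := by
    have hEa : e a = b := by rw [he]; exact Equiv.swap_apply_left a b
    have hEb : e b = a := by rw [he]; exact Equiv.swap_apply_right a b
    have hEx : ∀ x, x ≠ a → x ≠ b → e x = x := by
      intro x h1 h2; rw [he]; exact Equiv.swap_apply_of_ne_of_ne h1 h2
    intro u w hu hw h
    by_cases hua : u = a
    · by_cases hwa : w = a
      · rw [hua, hwa, hEa]; exact closedNbhd_self' G b
      · by_cases hwb : w = b
        · rw [hua, hwb, hEa, hEb]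
          rw [hua, hwb] at h
          exact closedNbhd_symm' h
        · rw [hua, hEa, hEx w hwa hwb]
          rw [hua] at h
          exact (htw w hw).mp h
    · by_cases hub : u = b
      · by_cases hwa : w = a
        · rw [hub, hwa, hEb, hEa]
          rw [hub, hwa] at h
          exact closedNbhd_symm' h
        · by_cases hwb : w = b
          · rw [hub, hwb, hEb]; exact closedNbhd_self' G a
          · rw [hub, hEb, hEx w hwa hwb]
            rw [hub] at h
            exact (htw w hw).mpr h
      · rw [hEx u hua hub]
        by_cases hwa : w = a
        · rw [hwa, hEa]
          rw [hwa] at h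
          exact closedNbhd_symm' ((htw u hu).mp (closedNbhd_symm' h))
        · by_cases hwb : w = b
          · rw [hwb, hEb]
            rw [hwb] at h
            exact closedNbhd_symm' ((htw u hu).mpr (closedNbhd_symm' h))
          · rw [hEx w hwa hwb]; exact h
  refine ⟨⟨hdl.1.map e.injective, ?_⟩, hmem⟩
  intro i hi hi'
  have hi2 : i < l.length := by simpa using hi
  have hi2' : i < l.length - 1 := by simpa using hi'
  obtain ⟨π, hπS, hπne, hπd⟩ := hdl.2 i hi2 hi2'
  have hdropeq : (l.map e).drop i = (l.drop i).map e := by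
    exact List.map_drop.symm
  have hgi : (l.map e)[i]'hi = e (l[i]'hi2) := List.getElem_map e
  have hπS' : (π : V) ∈ l.drop i := hπS
  have hπl : π ∈ l := List.mem_of_mem_drop hπS'
  have hil : l[i]'hi2 ∈ l := List.getElem_mem hi2
  refine ⟨e π, ?_, ?_, ?_⟩
  · show e π ∈ (l.map e).drop i
    rw [hdropeq]
    exact List.mem_map.mpr ⟨π, hπS', rfl⟩
  · rw [hgi]
    exact fun h => hπne (e.injective h)
  · intro w hw hwN
    have hw' : w ∈ (l.drop i).map e := by rwa [hdropeq] at hw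
    obtain ⟨w', hw'd, rfl⟩ := List.mem_map.mp hw'
    have hw'l : w' ∈ l := List.mem_of_mem_drop hw'd
    rw [hgi] at hwN
    have h1 : e (e w') ∈ closedNbhd G (e (e (l[i]'hi2))) :=
      hom _ _ (hS _ hil) (hS _ hw'l) hwN
    rw [Equiv.swap_apply_self, Equiv.swap_apply_self] at h1
    have h2 : w' ∈ closedNbhd G π := hπd w' hw'd h1
    exact hom π w' hπl hw'l h2

lemma exists_nil_case {G : SimpleGraph V} {T : Set V}
    (hTs : ∀ v ∈ T, v ∈ ([] : List V)) :
    ∃ l' : List V, IsDL G l' ∧ ∀ v, v ∈ l' ↔ v ∈ T := by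
  refine ⟨[], ⟨List.nodup_nil, fun i hi => by simp at hi⟩, fun v => ?_⟩
  constructor
  · intro hv; simp at hv
  · intro hv; exact absurd (hTs v hv) (by simp)

lemma main_induction [DecidableEq V] (G : SimpleGraph V) :
    ∀ n : ℕ, ∀ l : List V, l.length ≤ n → IsDL G l →
    ∀ T : Set V, (∀ v ∈ T, v ∈ l) →
    (∀ v ∈ l, ∃ w ∈ T, ∀ x ∈ l, (x ∈ closedNbhd G v ↔ x ∈ closedNbhd G w)) →
    ∃ l' : List V, IsDL G l' ∧ ∀ v, v ∈ l' ↔ v ∈ T := by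
  intro n
  induction n with
  | zero =>
    intro l hlen hdl T hTs hstar
    have hl : l = [] := List.length_eq_zero_iff.mp (Nat.le_zero.mp hlen)
    subst hl
    exact exists_nil_case hTs
  | succ n IH =>
    intro l hlen hdl T hTs hstar
    cases l with
    | nil => exact exists_nil_case hTs
    | cons σ rest =>
      have hlenr : rest.length ≤ n := by
        simpa using Nat.succ_le_succ_iff.mp (by simpa using hlen)
      by_cases hσT : σ ∈ T
      · by_cases htw : ∃ π' ∈ rest, π' ∉ T ∧
            ∀ x ∈ σ :: rest, (x ∈ closedNbhd G π' ↔ x ∈ closedNbhd G σ)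
        · -- twin case: swap σ with π' and recurse on the tail
          obtain ⟨π', hπ'r, hπ'T, hπtw⟩ := htw
          have hπ'l : π' ∈ σ :: rest := List.mem_cons_of_mem σ hπ'r
          have hσl : σ ∈ σ :: rest := List.mem_cons_self
          have hswap := isDL_swap hdl hσl hπ'l
            (fun x hx => ((hπtw x hx)).symm)
          set e := Equiv.swap σ π' with he
          obtain ⟨hdl2, hmem2⟩ := hswap
          have hcons : (σ :: rest).map e = π' :: rest.map e := by
            rw [List.map_cons, he, Equiv.swap_apply_left]
          rw [hcons] at hdl2
          have hmem2' : ∀ v, v ∈ π' :: rest.map ⇑e ↔ v ∈ σ :: rest := by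
            intro v; rw [← hcons]; exact hmem2 v
          have hdl3 : IsDL G (rest.map e) := isDL_tail hdl2
          have hlen3 : (rest.map e).length ≤ n := by simpa using hlenr
          apply IH (rest.map e) hlen3 hdl3 T
          · intro v hv
            have hv1 : v ∈ π' :: rest.map ⇑e := (hmem2' v).mpr (hTs v hv)
            rcases List.mem_cons.mp hv1 with rfl | hv2
            · exact absurd hv hπ'T
            · exact hv2
          · intro v hv
            have hvl : v ∈ σ :: rest :=
              (hmem2' v).mp (List.mem_cons_of_mem π' hv)
            obtain ⟨w, hw1, hw2⟩ := hstar v hvl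
            exact ⟨w, hw1, fun x hx =>
              hw2 x ((hmem2' x).mp (List.mem_cons_of_mem π' hx))⟩
        · -- no-twin case: σ goes first, recurse with T \ {σ}
          have hTs' : ∀ v ∈ T \ {σ}, v ∈ rest := by
            intro v hv
            rcases List.mem_cons.mp (hTs v hv.1) with rfl | hv2
            · exact absurd rfl hv.2
            · exact hv2
          have hσrest : σ ∉ rest := (List.nodup_cons.mp hdl.1).1
          have hstar' : ∀ v ∈ rest, ∃ w ∈ T \ {σ},
              ∀ x ∈ rest, (x ∈ closedNbhd G v ↔ x ∈ closedNbhd G w) := by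
            intro v hv
            have hvl : v ∈ σ :: rest := List.mem_cons_of_mem σ hv
            obtain ⟨w, hwT, hwiff⟩ := hstar v hvl
            by_cases hwσ : w = σ
            · have hvT : v ∈ T := by
                by_contra hvT
                exact htw ⟨v, hv, hvT, hwσ ▸ hwiff⟩
              have hvσ : v ≠ σ := fun h => hσrest (h ▸ hv)
              exact ⟨v, ⟨hvT, hvσ⟩, fun x hx => Iff.rfl⟩
            · exact ⟨w, ⟨hwT, hwσ⟩,
                fun x hx => hwiff x (List.mem_cons_of_mem σ hx)⟩
          obtain ⟨l', hdl', hmem'⟩ := IH rest hlenr (isDL_tail hdl) (T \ {σ})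
            hTs' hstar'
          -- assemble σ :: l'
          have hσl' : σ ∉ l' := fun h => ((hmem' σ).mp h).2 rfl
          have hmemT : ∀ v, v ∈ σ :: l' ↔ v ∈ T := by
            intro v
            rw [List.mem_cons, hmem' v]
            constructor
            · rintro (rfl | hv)
              · exact hσT
              · exact hv.1
            · intro hv
              by_cases hvσ : v = σ
              · exact Or.inl hvσ
              · exact Or.inr ⟨hv, hvσ⟩
          refine ⟨σ :: l', ⟨List.nodup_cons.mpr ⟨hσl', hdl'.1⟩, ?_⟩, hmemT⟩
          intro i hi hi'
          cases i with
          | zero =>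
            -- find a dominator of σ within T
            have hl'len : 0 < l'.length := by
              simp at hi'; omega
            have hl'ne : l' ≠ [] := List.ne_nil_of_length_pos hl'len
            obtain ⟨τ, hτ⟩ := List.exists_mem_of_ne_nil l' hl'ne
            have hτT : τ ∈ T \ {σ} := (hmem' τ).mp hτ
            have hrestne : rest ≠ [] := by
              intro h; rw [h] at hTs'; exact absurd (hTs' τ hτT) (by simp)
            have hrlen : 0 < rest.length := List.length_pos_iff.mpr hrestne
            obtain ⟨π, hπS, hπne, hπd⟩ := hdl.2 0 (by simp)
              (by simp; omega)
            have hπS' : π ∈ σ :: rest := hπS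
            have hπne' : π ≠ σ := by
              simpa using hπne
            obtain ⟨w, hwT, hwiff⟩ := hstar π hπS'
            have hg0 : (σ :: l')[0]'hi = σ := rfl
            by_cases hws : w = σ
            · -- π is itself a twin of σ, so π ∈ T by the no-twin hypothesis
              rw [hws] at hwiff
              have hπrest : π ∈ rest :=
                (List.mem_cons.mp hπS').resolve_left hπne'
              have hπT : π ∈ T := by
                by_contra hπT
                exact htw ⟨π, hπrest, hπT, hwiff⟩
              refine ⟨π, ?_, ?_, ?_⟩
              · show π ∈ (σ :: l').drop 0
                simpa using (hmemT π).mpr hπT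
              · rw [hg0]; exact hπne'
              · intro x hx hxN
                have hxT : x ∈ T := (hmemT x).mp hx
                have hxl : x ∈ σ :: rest := hTs x hxT
                rw [hg0] at hxN
                exact (hwiff x hxl).mpr hxN
            · refine ⟨w, ?_, ?_, ?_⟩
              · show w ∈ (σ :: l').drop 0
                simpa using (hmemT w).mpr hwT
              · rw [hg0]; exact hws
              · intro x hx hxN
                have hxT : x ∈ T := (hmemT x).mp hx
                have hxl : x ∈ σ :: rest := hTs x hxT
                rw [hg0] at hxN
                have hx1 : x ∈ closedNbhd G π := by
                  refine hπd x ?_ ?_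
                  · show x ∈ (σ :: rest).drop 0
                    simpa using hxl
                  · simpa using hxN
                exact (hwiff x hxl).mp hx1
          | succ j =>
            have hj : j < l'.length := by simpa using hi
            have hj' : j < l'.length - 1 := by
              simp only [List.length_cons] at hi'
              omega
            obtain ⟨π, hπ⟩ := hdl'.2 j hj hj'
            exact ⟨π, hπ⟩
      · -- σ ∉ T: just drop it
        apply IH rest hlenr (isDL_tail hdl) T
        · intro v hv
          rcases List.mem_cons.mp (hTs v hv) with rfl | hv2
          · exact absurd hv hσT
          · exact hv2
        · intro v hv
          obtain ⟨w, hw1, hw2⟩ := hstar v (List.mem_cons_of_mem σ hv)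
          exact ⟨w, hw1, fun x hx => hw2 x (List.mem_cons_of_mem σ hx)⟩


/-- Let `Γ` be a finite dismantlable graph and let `T` contain exactly
one vertex from each class of the equivalence `N(σ) = N(ρ)`. Then the subgraph induced
on `T` is dismantlable. -/
theorem dismantlableOn_transversal {V : Type*} [Fintype V] (G : SimpleGraph V)
    (hG : Dismantlable G) (T : Set V)
    (hT : ∀ v : V, ∃! w, w ∈ T ∧ closedNbhd G v = closedNbhd G w) :
    DismantlableOn G T := by
  classical
  obtain ⟨l, hnd, hmem, hdom⟩ := hG
  obtain ⟨l', hdl', hmem'⟩ := main_induction G l.length l le_rfl ⟨hnd, hdom⟩ T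
    (fun v _ => (hmem v).mpr (Set.mem_univ v))
    (fun v _ => by
      obtain ⟨w, ⟨hwT, hwN⟩, _⟩ := hT v
      exact ⟨w, hwT, fun x _ => by rw [hwN]⟩)
  exact ⟨l', hdl'.1, hmem', hdl'.2⟩
end
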